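/- The matrices A = [[4,3,0],[-3,4,0],[0,0,5]] and B = [[4,0,3],[0,5,0],[-3,0,4]] satisfy: for any two distinct binary strings x ≠ y of the same length n, the matrix products M(x) and M(y) (where M maps 0 to A, 1 to B, and a string to the product of the corresponding matrices) are distinct. -/

import Mathlib

namespace AWaux

def MZ : Bool → Matrix (Fin 3) (Fin 3) ℤ
  | false => !![4, 3, 0; -3, 4, 0; 0, 0, 5]
  | true  => !![4, 0, 3; 0, 5, 0; -3, 0, 4]

noncomputable def N (b : Bool) : Matrix (Fin 3) (Fin 3) (ZMod 5) :=
  ((Int.castRingHom (ZMod 5)).mapMatrix (MZ b))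

def v : Bool → (Fin 3 → ZMod 5)
  | false => ![2, 1, 0]
  | true  => ![2, 0, 1]

lemma Nv (b c : Bool) : (N b).mulVec (v c) = (if b = c then (3 : ZMod 5) else 4) • v b := by
  cases b <;> cases c <;>
    · funext i
      fin_cases i <;>
        simp [N, MZ, v, Matrix.mulVec, dotProduct, Fin.sum_univ_three] <;> decide

lemma key (l : List Bool) (b : Bool) :
    ∃ t : ZMod 5, t ≠ 0 ∧ (((b :: l).map N).prod).mulVec (v false) = t • v b := by
  induction l generalizing b with
  | nil =>
    refine ⟨if b = false then 3 else 4, by cases b <;> decide, ?_⟩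
    simpa using Nv b false
  | cons c l ih =>
    obtain ⟨s, hs, hprod⟩ := ih c
    refine ⟨(if b = c then (3 : ZMod 5) else 4) * s, ?_, ?_⟩
    · have h1 : (if b = c then (3 : ZMod 5) else 4) ≠ 0 := by cases b <;> cases c <;> decide
      haveI : Fact (Nat.Prime 5) := ⟨by norm_num⟩
      exact mul_ne_zero h1 hs
    · have : (((b :: c :: l).map N).prod) = N b * (((c :: l).map N).prod) := by
        simp [List.prod_cons]
      rw [this, ← Matrix.mulVec_mulVec, hprod, Matrix.mulVec_smul, Nv, smul_smul, mul_comm]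

end AWaux

namespace AWaux

noncomputable def fm : Matrix (Fin 3) (Fin 3) ℤ →+* Matrix (Fin 3) (Fin 3) ℚ :=
  (Int.castRingHom ℚ).mapMatrix

noncomputable def gm : Matrix (Fin 3) (Fin 3) ℤ →+* Matrix (Fin 3) (Fin 3) (ZMod 5) :=
  (Int.castRingHom (ZMod 5)).mapMatrix

lemma prod_eq_fm (M : Bool → Matrix (Fin 3) (Fin 3) ℚ) (hM : ∀ b, M b = fm (MZ b))
    (l : List Bool) : (l.map M).prod = fm ((l.map MZ).prod) := by
  rw [map_list_prod fm, List.map_map]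
  congr 1
  exact List.map_congr_left fun b _ => hM b

lemma prod_eq_gm (l : List Bool) : (l.map N).prod = gm ((l.map MZ).prod) := by
  rw [map_list_prod gm, List.map_map]
  rfl

lemma fm_inj : Function.Injective fm := by
  intro X Y h
  ext i j
  have := congrArg (fun Z => Z i j) h
  simpa [fm, Matrix.map_apply] using this

lemma lists_eq (M : Bool → Matrix (Fin 3) (Fin 3) ℚ) (hM : ∀ b, M b = fm (MZ b)) :
    ∀ l1 l2 : List Bool, l1.length = l2.length →
      (l1.map M).prod = (l2.map M).prod → l1 = l2 := by
  intro l1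
  induction l1 with
  | nil =>
    intro l2 hlen _
    exact (List.eq_nil_of_length_eq_zero hlen.symm).symm
  | cons b1 l1 ih =>
    intro l2 hlen hprod
    cases l2 with
    | nil => simp at hlen
    | cons b2 l2 =>
      simp only [List.length_cons, Nat.add_right_cancel_iff] at hlen
      by_cases hb : b1 = b2
      · subst hb
        have hu : IsUnit (M b1) := by
          rw [Matrix.isUnit_iff_isUnit_det]
          cases b1 <;>
            · rw [hM]
              simp [fm, MZ, Matrix.det_fin_three, Matrix.map_apply]
              norm_num
        have hP : (l1.map M).prod = (l2.map M).prod := by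
          simp only [List.map_cons, List.prod_cons] at hprod
          exact hu.mul_left_cancel hprod
        rw [ih l2 hlen hP]
      · exfalso
        -- transfer to ℤ then ZMod 5
        rw [prod_eq_fm M hM, prod_eq_fm M hM] at hprod
        have hZ := fm_inj hprod
        have hN : (((b1 :: l1).map N).prod) = (((b2 :: l2).map N).prod) := by
          rw [prod_eq_gm, prod_eq_gm, hZ]
        obtain ⟨t1, ht1, h1⟩ := key l1 b1
        obtain ⟨t2, ht2, h2⟩ := key l2 b2
        rw [hN, h2] at h1
        cases b1 <;> cases b2 <;> simp_all
        · have := congrFun h1 1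
          simp [v] at this
          exact ht1 this.symm
        · have := congrFun h1 1
          simp [v] at this
          exact ht2 this

end AWaux

theorem AW_injective_on_equal_length_strings
    (A : Matrix (Fin 3) (Fin 3) ℚ) (B : Matrix (Fin 3) (Fin 3) ℚ)
    (hA : A = !![4, 3, 0; -3, 4, 0; 0, 0, 5])
    (hB : B = !![4, 0, 3; 0, 5, 0; -3, 0, 4])
    (M : Bool → Matrix (Fin 3) (Fin 3) ℚ)
    (hM0 : M false = A) (hM1 : M true = B)
    (n : ℕ) (x y : Fin n → Bool) (hxy : x ≠ y) :
    (List.ofFn fun i => M (x i)).reverse.prod ≠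
      (List.ofFn fun i => M (y i)).reverse.prod := by
  intro h
  apply hxy
  have hM : ∀ b, M b = AWaux.fm (AWaux.MZ b) := by
    intro b
    cases b
    · rw [hM0, hA]
      ext i j
      fin_cases i <;> fin_cases j <;>
        simp [AWaux.fm, AWaux.MZ, Matrix.map_apply]
    · rw [hM1, hB]
      ext i j
      fin_cases i <;> fin_cases j <;>
        simp [AWaux.fm, AWaux.MZ, Matrix.map_apply]
  have hx : (List.ofFn fun i => M (x i)).reverse = ((List.ofFn x).reverse).map M := by
    rw [List.map_reverse, List.map_ofFn]
    rfl
  have hy : (List.ofFn fun i => M (y i)).reverse = ((List.ofFn y).reverse).map M := by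
    rw [List.map_reverse, List.map_ofFn]
    rfl
  rw [hx, hy] at h
  have := AWaux.lists_eq M hM _ _ (by simp) h
  have := List.reverse_injective this
  exact List.ofFn_inj.mp this
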